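/- Let (Ω, 𝔉, P) be a probability space, X a measurable space, and (f_x)_{x∈X} a centered Gaussian process on Ω with covariance function k(x, x′) = E[f_x·f_{x′}], such that each f_x ∈ L²(Ω, P) and the map x ↦ f_x ∈ L²(Ω, P) is strongly measurable. Let Z be an index set and (ν_z)_{z∈Z} a family of finite measures on X such that for each z the map x ↦ f_x is Bochner integrable in L²(Ω, P) with respect to ν_z. Define g_z = ∫ f_x dν_z(x) as a Bochner integral in L²(Ω, P). Then (g_z)_{z∈Z} is a centered Gaussian process with covariance function q(z, z′) = E[g_z·g_{z′}] = ∬ k(x, x′) dν_z(x) dν_{z′}(x′). -/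

import Mathlib

open MeasureTheory ProbabilityTheory Real Set Filter

section AuxLemmas


lemma integral_sq_exp_Ioi {b : ℝ} (hb : 0 < b) :
    ∫ x in Ioi (0:ℝ), x ^ 2 * Real.exp (-b * x ^ 2) = Real.sqrt (π / b) / (4 * b) := by
  have hint2 : Integrable (fun x : ℝ => x ^ 2 * Real.exp (-b * x ^ 2)) := by
    have := integrable_rpow_mul_exp_neg_mul_sq hb (s := 2) (by norm_num)
    convert this using 2 with x
    rw [show ((2:ℝ) = ((2:ℕ):ℝ)) by norm_num, Real.rpow_natCast]
  have hint1 : Integrable (fun x : ℝ => Real.exp (-b * x ^ 2)) := integrable_exp_neg_mul_sq hb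
  -- H x = -x * exp (-b x^2) / (2b), H' x = x^2 exp(-b x^2) - exp(-b x^2) / (2b)
  set H : ℝ → ℝ := fun x => -x * Real.exp (-b * x ^ 2) / (2 * b) with hH
  have hderiv : ∀ x ∈ Ici (0:ℝ), HasDerivAt H
      (x ^ 2 * Real.exp (-b * x ^ 2) - Real.exp (-b * x ^ 2) / (2 * b)) x := by
    intro x _
    have h1 : HasDerivAt (fun x : ℝ => -b * x ^ 2) (-b * (2 * x)) x := by
      simpa using ((hasDerivAt_pow 2 x).const_mul (-b))
    have h2 : HasDerivAt (fun x : ℝ => Real.exp (-b * x ^ 2)) (Real.exp (-b * x ^ 2) * (-b * (2*x))) x := h1.exp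
    have h3 : HasDerivAt (fun x : ℝ => -x * Real.exp (-b * x ^ 2))
        ((-1) * Real.exp (-b * x ^ 2) + (-x) * (Real.exp (-b * x ^ 2) * (-b * (2*x)))) x := by
      exact (hasDerivAt_neg x).mul h2
    have h4 := h3.div_const (2 * b)
    refine h4.congr_deriv ?_
    rw [div_eq_iff (show (2 * b) ≠ 0 by positivity), sub_mul, div_mul_cancel₀ _ (show (2 * b) ≠ 0 by positivity)]
    ring
  have htend : Tendsto H atTop (nhds 0) := by
    have : Tendsto (fun x : ℝ => x * Real.exp (-b * x ^ 2)) atTop (nhds 0) := by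
      have ho := rpow_mul_exp_neg_mul_sq_isLittleO_exp_neg hb 1
      have ht : Tendsto (fun x : ℝ => Real.exp (-(1/2) * x)) atTop (nhds 0) := by
        have : Tendsto (fun x : ℝ => (1/2) * x) atTop atTop :=
          Filter.Tendsto.const_mul_atTop (by norm_num) tendsto_id
        exact (tendsto_exp_neg_atTop_nhds_zero.comp this).congr (fun x => by simp [Function.comp, neg_mul])
      have := ho.trans_tendsto ht
      simpa [Real.rpow_one] using this
    have := (this.neg).div_const (2 * b)
    simpa [hH, neg_div, neg_mul] using this
  have key := integral_Ioi_of_hasDerivAt_of_tendsto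
    (f := H) (f' := fun x => x ^ 2 * Real.exp (-b * x ^ 2) - Real.exp (-b * x ^ 2) / (2 * b))
    (a := 0) ?_ (fun x hx => hderiv x (Ioi_subset_Ici_self hx)) ?_ htend
  · have h0 : H 0 = 0 := by simp [hH]
    rw [h0, sub_zero] at key
    have hsplit : ∫ x in Ioi (0:ℝ), (x ^ 2 * Real.exp (-b * x ^ 2) - Real.exp (-b * x ^ 2) / (2 * b))
        = (∫ x in Ioi (0:ℝ), x ^ 2 * Real.exp (-b * x ^ 2)) - ∫ x in Ioi (0:ℝ), Real.exp (-b * x ^ 2) / (2 * b) := by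
      exact integral_sub (hint2.integrableOn) ((hint1.div_const _).integrableOn)
    rw [hsplit] at key
    have hIoi : ∫ x in Ioi (0:ℝ), Real.exp (-b * x ^ 2) / (2*b) = Real.sqrt (π / b) / 2 / (2*b) := by
      rw [integral_div, integral_gaussian_Ioi]
    rw [hIoi] at key
    have : (∫ x in Ioi (0:ℝ), x ^ 2 * Real.exp (-b * x ^ 2)) = Real.sqrt (π/b) / 2 / (2*b) := by linarith
    rw [this]; ring
  · exact (hderiv 0 (by simp)).continuousAt.continuousWithinAt
  · exact (hint2.sub (hint1.div_const _)).integrableOn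

lemma integral_id_sq_gaussianReal (v : NNReal) :
    ∫ x, x ^ 2 ∂(gaussianReal 0 v) = v := by
  rcases eq_or_ne v 0 with hv | hv
  · simp [hv, gaussianReal_zero_var]
  · rw [gaussianReal_of_var_ne_zero 0 hv]
    have hpdf : gaussianPDF 0 v = fun x => ((gaussianPDFReal 0 v x).toNNReal : ENNReal) := by
      ext x; rw [gaussianPDF_def]; rfl
    rw [hpdf]
    rw [integral_withDensity_eq_integral_smul
      ((measurable_gaussianPDFReal 0 v).real_toNNReal)]
    have hvpos : (0:ℝ) < (v:ℝ) := by positivity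
    set b : ℝ := (2 * (v:ℝ))⁻¹ with hb
    have hbpos : 0 < b := by positivity
    have hcongr : ∀ x : ℝ, (gaussianPDFReal 0 v x).toNNReal • x ^ 2
        = (Real.sqrt (2 * Real.pi * v))⁻¹ * (x ^ 2 * Real.exp (-b * x ^ 2)) := by
      intro x
      have hnn := gaussianPDFReal_nonneg 0 v x
      rw [NNReal.smul_def, Real.coe_toNNReal _ hnn, gaussianPDFReal]
      have harg : -(x - 0) ^ 2 / (2 * (v:ℝ)) = -b * x ^ 2 := by rw [hb]; ring
      rw [harg, smul_eq_mul]; ring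
    rw [funext hcongr, integral_const_mul]
    have hfull : ∫ x : ℝ, x ^ 2 * Real.exp (-b * x ^ 2) = Real.sqrt (Real.pi / b) / (2 * b) := by
      have habs : (fun x : ℝ => x ^ 2 * Real.exp (-b * x ^ 2))
          = fun x : ℝ => |x| ^ 2 * Real.exp (-b * |x| ^ 2) := by
        funext x; rw [sq_abs]
      rw [habs, integral_comp_abs (f := fun x => x ^ 2 * Real.exp (-b * x ^ 2)),
        integral_sq_exp_Ioi hbpos]
      ring
    rw [hfull]
    have h1 : Real.pi / b = 2 * Real.pi * v := by
      rw [hb, div_eq_mul_inv, inv_inv]; ring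
    have h2 : (2 * b) = (v:ℝ)⁻¹ := by
      rw [hb, mul_inv, ← mul_assoc, mul_inv_cancel₀ (two_ne_zero), one_mul]
    rw [h1, h2]
    have h3 : Real.sqrt (2 * Real.pi * v) ≠ 0 := by positivity
    rw [div_eq_mul_inv, inv_inv, ← mul_assoc, inv_mul_cancel₀ h3, one_mul]


lemma seq_inv_succ_pos (n : ℕ) : (0:ℝ) < 1/(n+1) := by positivity

lemma map_limit_gaussian {Ω : Type*} [MeasurableSpace Ω] (P : Measure Ω) [IsProbabilityMeasure P]
    (Y : ℕ → Ω → ℝ) (Y0 : Ω → ℝ) (hY : ∀ n, AEMeasurable (Y n) P) (hY0 : AEMeasurable Y0 P)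
    {v : NNReal} (hv : v ≠ 0) (hmap : ∀ n, P.map (Y n) = gaussianReal 0 v)
    (htend : TendstoInMeasure P Y atTop Y0) : P.map Y0 = gaussianReal 0 v := by
  set μ := gaussianReal 0 v with hμ
  haveI : IsProbabilityMeasure (P.map Y0) := Measure.isProbabilityMeasure_map hY0
  have hYapp : ∀ n (t : ℝ), P {ω | Y n ω ≤ t} = μ (Iic t) := by
    intro n t
    rw [← hmap n, Measure.map_apply_of_aemeasurable (hY n) measurableSet_Iic]
    rfl
  have hY0app : ∀ t : ℝ, P.map Y0 (Iic t) = P {ω | Y0 ω ≤ t} := by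
    intro t
    rw [Measure.map_apply_of_aemeasurable hY0 measurableSet_Iic]
    rfl
  refine Measure.ext_of_Iic (P.map Y0) μ (fun a => le_antisymm ?_ ?_)
  · -- upper bound
    have hub : ∀ ε : ℝ, 0 < ε → P.map Y0 (Iic a) ≤ μ (Iic (a + ε)) := by
      intro ε hε
      have hsub : ∀ n, {ω | Y0 ω ≤ a} ⊆ {ω | Y n ω ≤ a + ε} ∪ {ω | ε ≤ dist (Y n ω) (Y0 ω)} := by
        intro n ω hω
        by_cases h : Y n ω ≤ a + ε
        · exact Or.inl h
        · right
          push_neg at h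
          have hω' : Y0 ω ≤ a := hω
          have : ε ≤ Y n ω - Y0 ω := by linarith
          calc ε ≤ Y n ω - Y0 ω := this
            _ ≤ |Y n ω - Y0 ω| := le_abs_self _
            _ = dist (Y n ω) (Y0 ω) := (Real.dist_eq _ _).symm
      have hle : ∀ n, P.map Y0 (Iic a) ≤ μ (Iic (a + ε)) + P {ω | ε ≤ dist (Y n ω) (Y0 ω)} := by
        intro n
        rw [hY0app]
        refine (measure_mono (hsub n)).trans ((measure_union_le _ _).trans ?_)
        rw [hYapp n]
      have hlim : Tendsto (fun n => μ (Iic (a + ε)) + P {ω | ε ≤ dist (Y n ω) (Y0 ω)})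
          atTop (nhds (μ (Iic (a + ε)) + 0)) :=
        tendsto_const_nhds.add (tendstoInMeasure_iff_dist.mp htend ε hε)
      rw [add_zero] at hlim
      exact ge_of_tendsto hlim (Eventually.of_forall hle)
    have hseq : Tendsto (fun n : ℕ => μ (Iic (a + 1/(n+1)))) atTop (nhds (μ (Iic a))) := by
      have hInter : ⋂ n : ℕ, Iic (a + 1/(n+1)) = Iic a := by
        ext x
        simp only [mem_iInter, mem_Iic]
        constructor
        · intro h
          refine le_of_forall_pos_le_add (fun ε hε => ?_)
          obtain ⟨n, hn⟩ := exists_nat_one_div_lt hε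
          exact (h n).trans (by linarith)
        · intro h n
          have := seq_inv_succ_pos n
          linarith
      have hanti : Antitone (fun n : ℕ => Iic (a + 1/(n+1))) := by
        intro n m hnm
        apply Iic_subset_Iic.mpr
        have hc : ((n:ℝ)+1) ≤ ((m:ℝ)+1) := by exact_mod_cast Nat.succ_le_succ hnm
        have : (1:ℝ)/(m+1) ≤ 1/(n+1) := one_div_le_one_div_of_le (by positivity) hc
        linarith
      have := tendsto_measure_iInter_atTop (μ := μ)
        (fun n => (measurableSet_Iic).nullMeasurableSet) hanti ⟨0, measure_ne_top _ _⟩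
      rwa [hInter] at this
    exact ge_of_tendsto hseq (Eventually.of_forall fun n => hub _ (seq_inv_succ_pos n))
  · -- lower bound
    have hlb : ∀ ε : ℝ, 0 < ε → μ (Iic (a - ε)) ≤ P.map Y0 (Iic a) := by
      intro ε hε
      have hsub : ∀ n, {ω | Y n ω ≤ a - ε} ⊆ {ω | Y0 ω ≤ a} ∪ {ω | ε ≤ dist (Y n ω) (Y0 ω)} := by
        intro n ω hω
        by_cases h : Y0 ω ≤ a
        · exact Or.inl h
        · right
          push_neg at h
          have hω' : Y n ω ≤ a - ε := hω
          calc ε ≤ Y0 ω - Y n ω := by linarith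
            _ ≤ |Y0 ω - Y n ω| := le_abs_self _
            _ = dist (Y n ω) (Y0 ω) := by rw [dist_comm, Real.dist_eq]
      have hle : ∀ n, μ (Iic (a - ε)) ≤ P.map Y0 (Iic a) + P {ω | ε ≤ dist (Y n ω) (Y0 ω)} := by
        intro n
        rw [← hYapp n, hY0app]
        exact (measure_mono (hsub n)).trans (measure_union_le _ _)
      have hlim : Tendsto (fun n => P.map Y0 (Iic a) + P {ω | ε ≤ dist (Y n ω) (Y0 ω)})
          atTop (nhds (P.map Y0 (Iic a) + 0)) :=
        tendsto_const_nhds.add (tendstoInMeasure_iff_dist.mp htend ε hε)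
      rw [add_zero] at hlim
      exact ge_of_tendsto hlim (Eventually.of_forall hle)
    have hseq : Tendsto (fun n : ℕ => μ (Iic (a - 1/(n+1)))) atTop (nhds (μ (Iio a))) := by
      have hUnion : ⋃ n : ℕ, Iic (a - 1/(n+1)) = Iio a := by
        ext x
        simp only [mem_iUnion, mem_Iic, mem_Iio]
        constructor
        · rintro ⟨n, hn⟩
          have := seq_inv_succ_pos n
          linarith
        · intro h
          obtain ⟨n, hn⟩ := exists_nat_one_div_lt (show (0:ℝ) < a - x by linarith)
          exact ⟨n, by linarith⟩
      have hmono : Monotone (fun n : ℕ => Iic (a - 1/(n+1))) := by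
        intro n m hnm
        apply Iic_subset_Iic.mpr
        have hc : ((n:ℝ)+1) ≤ ((m:ℝ)+1) := by exact_mod_cast Nat.succ_le_succ hnm
        have : (1:ℝ)/(m+1) ≤ 1/(n+1) := one_div_le_one_div_of_le (by positivity) hc
        linarith
      have := tendsto_measure_iUnion_atTop (μ := μ) hmono
      rwa [hUnion] at this
    have hIio : μ (Iio a) ≤ P.map Y0 (Iic a) :=
      le_of_tendsto hseq (Eventually.of_forall fun n => hlb _ (seq_inv_succ_pos n))
    have hsing : μ {a} = 0 :=
      gaussianReal_absolutelyContinuous 0 hv (measure_singleton a)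
    calc μ (Iic a) ≤ μ (Iio a ∪ {a}) := by
          apply measure_mono; intro x hx
          rcases eq_or_lt_of_le (mem_Iic.mp hx) with h | h
          · exact Or.inr (by simp [h])
          · exact Or.inl h
      _ ≤ μ (Iio a) + μ {a} := measure_union_le _ _
      _ = μ (Iio a) := by rw [hsing, add_zero]
      _ ≤ P.map Y0 (Iic a) := hIio


set_option synthInstance.maxHeartbeats 1000000 in
lemma lp_frechetUrysohn {α E : Type*} [MeasurableSpace α] {μ : Measure α}
    [NormedAddCommGroup E] {p : ENNReal} [Fact (1 ≤ p)] : FrechetUrysohnSpace (Lp E p μ) :=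
  FirstCountableTopology.frechetUrysohnSpace

lemma coeFn_lincomb {Ω : Type*} [MeasurableSpace Ω] {P : Measure Ω}
    {ι : Type*} (s : Finset ι) (c : ι → ℝ) (F : ι → Lp ℝ 2 P) :
    ⇑(∑ i ∈ s, c i • F i) =ᵐ[P] fun ω => ∑ i ∈ s, c i * F i ω := by
  induction s using Finset.cons_induction with
  | empty =>
    simp only [Finset.sum_empty]
    exact Lp.coeFn_zero ℝ 2 P
  | cons a s ha ih =>
    rw [Finset.sum_cons]
    filter_upwards [Lp.coeFn_add (c a • F a) (∑ i ∈ s, c i • F i),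
      Lp.coeFn_smul (c a) (F a), ih] with ω h1 h2 h3
    rw [h1, Pi.add_apply, h2, h3]
    simp [Finset.sum_cons]

section LpAux
variable {Ω : Type*} [MeasurableSpace Ω] {P : Measure Ω} [IsProbabilityMeasure P]


variable {Ω : Type*} [MeasurableSpace Ω] {P : Measure Ω} [IsProbabilityMeasure P]

omit [IsProbabilityMeasure P] in
lemma integral_sq_eq_norm_sq (e : Lp ℝ 2 P) : ∫ ω, (e ω) ^ 2 ∂P = ‖e‖ ^ 2 := by
  have h1 : @inner ℝ _ _ e e = ∫ ω, @inner ℝ ℝ _ (e ω) (e ω) ∂P := L2.inner_def e e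
  have h2 : ∀ ω, @inner ℝ ℝ _ (e ω) (e ω) = (e ω) ^ 2 := by
    intro ω; simp [RCLike.inner_apply]
  simp_rw [h2] at h1
  rw [← h1, real_inner_self_eq_norm_sq]

lemma gaussian_variance_eq (e : Lp ℝ 2 P) (w : NNReal)
    (hw : P.map ⇑e = gaussianReal 0 w) : (w : ℝ) = ‖e‖ ^ 2 := by
  have hm : AEMeasurable (⇑e) P := (Lp.aestronglyMeasurable e).aemeasurable
  have : ∫ x, x ^ 2 ∂(P.map ⇑e) = ∫ ω, (e ω) ^ 2 ∂P :=
    integral_map hm (by fun_prop)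
  rw [hw, integral_id_sq_gaussianReal] at this
  rw [this, integral_sq_eq_norm_sq]

lemma gaussian_lp_limit (h : Lp ℝ 2 P) (hn : ℕ → Lp ℝ 2 P)
    (hG : ∀ n, ∃ v : NNReal, P.map ⇑(hn n) = gaussianReal 0 v)
    (hlim : Filter.Tendsto hn atTop (nhds h)) :
    ∃ v : NNReal, P.map ⇑h = gaussianReal 0 v := by
  choose w hw using hG
  have hwn : ∀ n, (w n : ℝ) = ‖hn n‖ ^ 2 := fun n => gaussian_variance_eq _ _ (hw n)
  by_cases hz : ‖h‖ = 0
  · refine ⟨0, ?_⟩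
    have h0 : h = 0 := norm_eq_zero.mp hz
    have : (⇑h : Ω → ℝ) =ᵐ[P] fun _ => (0:ℝ) := by rw [h0]; exact Lp.coeFn_zero _ _ _
    rw [Measure.map_congr this, Measure.map_const, gaussianReal_zero_var,
      measure_univ, one_smul]
  · set v : NNReal := ‖h‖₊ ^ 2 with hv
    have hnn0 : ‖h‖₊ ≠ 0 := by
      intro hc
      exact hz (by rw [← coe_nnnorm, hc, NNReal.coe_zero])
    have hvne : v ≠ 0 := by rw [hv]; exact pow_ne_zero 2 hnn0
    refine ⟨v, ?_⟩
    have hvr : (v : ℝ) = ‖h‖ ^ 2 := by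
      rw [hv]; push_cast; rfl
    -- w n → v in ℝ
    have hwt : Tendsto (fun n => (w n : ℝ)) atTop (nhds (v : ℝ)) := by
      rw [hvr]
      simp_rw [hwn]
      exact ((continuous_norm.tendsto h).comp hlim).pow 2
    have hvpos : (0:ℝ) < v := by positivity
    -- eventually w n > 0
    have hev : ∀ᶠ n in atTop, (0:ℝ) < (w n : ℝ) := hwt.eventually (eventually_gt_nhds hvpos)
    obtain ⟨N, hN⟩ := hev.exists_forall_of_atTop
    set c : ℕ → ℝ := fun n => Real.sqrt v / Real.sqrt (w (n + N)) with hc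
    have hwpos : ∀ n, (0:ℝ) < w (n + N) := fun n => hN (n + N) (Nat.le_add_left N n)
    have hct : Tendsto c atTop (nhds 1) := by
      have h1 : Tendsto (fun n => (w (n + N) : ℝ)) atTop (nhds (v:ℝ)) :=
        hwt.comp (tendsto_add_atTop_nat N)
      have h2 : Tendsto (fun n => Real.sqrt (w (n + N))) atTop (nhds (Real.sqrt v)) :=
        (Real.continuous_sqrt.tendsto _).comp h1
      have h3 : Real.sqrt v ≠ 0 := by positivity
      have h4 := (tendsto_const_nhds (x := Real.sqrt v) (f := atTop (α := ℕ))).div h2 h3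
      rw [div_self h3] at h4
      exact h4
    -- the rescaled sequence
    set e : ℕ → Lp ℝ 2 P := fun n => c n • hn (n + N) with he
    have helim : Tendsto e atTop (nhds h) := by
      rw [he]
      have h1 : Tendsto (fun n => hn (n + N)) atTop (nhds h) :=
        hlim.comp (tendsto_add_atTop_nat N)
      have h2 := hct.smul h1
      rw [one_smul] at h2
      exact h2
    -- maps
    have hmapn : ∀ n, P.map (c n • (⇑(hn (n + N)) : Ω → ℝ)) = gaussianReal 0 v := by
      intro n
      have hsm : (c n • (⇑(hn (n + N)) : Ω → ℝ)) = (fun x : ℝ => c n * x) ∘ ⇑(hn (n + N)) := by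
        funext ω; simp [smul_eq_mul]
      rw [hsm, ← AEMeasurable.map_map_of_aemeasurable
        (measurable_const_mul (c n)).aemeasurable (Lp.aestronglyMeasurable _).aemeasurable,
        hw (n + N), gaussianReal_map_const_mul, mul_zero]
      congr 1
      refine NNReal.coe_inj.mp ?_
      push_cast [NNReal.coe_mk]
      rw [hc]
      rw [div_pow, Real.sq_sqrt (by positivity : (0:ℝ) ≤ (v:ℝ)), Real.sq_sqrt (hwpos n).le,
        div_mul_cancel₀ _ (hwpos n).ne']
    -- tendsto in measure
    have htm : TendstoInMeasure P (fun n => (c n • (⇑(hn (n + N)) : Ω → ℝ))) atTop ⇑h := by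
      apply tendstoInMeasure_of_tendsto_eLpNorm (p := 2) (by norm_num)
        (fun n => (Lp.aestronglyMeasurable _).const_smul (c n)) (Lp.aestronglyMeasurable h)
      have hnorm : Tendsto (fun n => ‖e n - h‖) atTop (nhds 0) :=
        tendsto_iff_norm_sub_tendsto_zero.mp helim
      have hofreal := ENNReal.tendsto_ofReal hnorm
      rw [ENNReal.ofReal_zero] at hofreal
      apply hofreal.congr
      intro n
      have hae : (c n • (⇑(hn (n + N)) : Ω → ℝ)) - ⇑h =ᵐ[P] ⇑(e n - h) := by
        filter_upwards [Lp.coeFn_smul (c n) (hn (n + N)), Lp.coeFn_sub (e n) h] with ω h1 h2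
        rw [h2, he]
        simp only [Pi.sub_apply, Pi.smul_apply]
        rw [h1]
        simp
      rw [eLpNorm_congr_ae hae, Lp.norm_def,
        ENNReal.ofReal_toReal (Lp.eLpNorm_ne_top _)]
    -- conclude
    have hYm : ∀ n, AEMeasurable (c n • (⇑(hn (n + N)) : Ω → ℝ)) P := fun n =>
      ((Lp.aestronglyMeasurable _).const_smul (c n)).aemeasurable
    exact map_limit_gaussian P _ _ hYm (Lp.aestronglyMeasurable h).aemeasurable hvne hmapn htm

end LpAux
end AuxLemmas


open MeasureTheory ProbabilityTheory

/-- A process `(f_t)_{t ∈ T}` on a measure space `(Ω, P)` is a centered Gaussian process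
if every finite real linear combination `∑ i, c i * f (t i)` is a centered real Gaussian
random variable. -/
def IsCenteredGaussianProcess {Ω T : Type*} [MeasurableSpace Ω]
    (P : Measure Ω) (f : T → Ω → ℝ) : Prop :=
  ∀ (n : ℕ) (t : Fin n → T) (c : Fin n → ℝ), ∃ v : NNReal,
    P.map (fun ω => ∑ i, c i * f (t i) ω) = gaussianReal 0 v

/-- Conditional mean process for the IV setting. If `(f_x)` is a centered Gaussian
process with covariance `k(x, x′) = E[f_x f_{x′}]`, with `x ↦ f_x ∈ L²(Ω, P)` strongly
measurable, and `(ν_z)` is a family of finite measures with respect to which `f` is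
Bochner integrable, then `g_z = ∫ f_x dν_z(x)` is a centered Gaussian process with
covariance `q(z, z′) = E[g_z g_{z′}] = ∬ k(x, x′) dν_z(x) dν_{z′}(x′)`. -/
theorem conditional_mean_process_IV
    {Ω : Type*} [MeasurableSpace Ω] (P : Measure Ω) [IsProbabilityMeasure P]
    {X : Type*} [MeasurableSpace X] {Z : Type*}
    (f : X → Lp ℝ 2 P) (hmeas : StronglyMeasurable f)
    (hGP : IsCenteredGaussianProcess P (fun x => ⇑(f x)))
    (k : X → X → ℝ) (hk : ∀ x x', k x x' = ∫ ω, f x ω * f x' ω ∂P)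
    (ν : Z → Measure X) (hfin : ∀ z, IsFiniteMeasure (ν z))
    (hint : ∀ z, Integrable f (ν z))
    (g : Z → Lp ℝ 2 P) (hg : ∀ z, g z = ∫ x, f x ∂(ν z)) :
    IsCenteredGaussianProcess P (fun z => ⇑(g z)) ∧
    ∀ z z', (∫ ω, g z ω * g z' ω ∂P) = ∫ x', ∫ x, k x x' ∂(ν z) ∂(ν z') := by
  classical
  have hinner : ∀ (a b : Lp ℝ 2 P), @inner ℝ _ _ a b = ∫ ω, a ω * b ω ∂P := by
    intro a b
    rw [L2.inner_def]
    refine integral_congr_ae (Filter.Eventually.of_forall fun ω => ?_)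
    simp [RCLike.inner_apply]
    ring
  set V : Submodule ℝ (Lp ℝ 2 P) := (Submodule.span ℝ (Set.range f)).topologicalClosure with hV
  -- membership of the integrals in the closed span
  have hgV : ∀ z, g z ∈ V := by
    intro z
    haveI := hfin z
    rw [hV, ← Submodule.orthogonal_orthogonal_eq_closure,
      Submodule.mem_orthogonal]
    intro u hu
    have hu' : ∀ x : X, @inner ℝ _ _ u (f x) = 0 := by
      intro x
      have := (Submodule.mem_orthogonal _ u).mp hu (f x)
        (Submodule.subset_span (Set.mem_range_self x))
      rw [real_inner_comm] at this
      exact this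
    have hcomm := (innerSL ℝ u).integral_comp_comm (hint z)
    have h0 : (inner ℝ u (g z) : ℝ) = ((innerSL ℝ) u) (g z) := (innerSL_apply_apply (𝕜 := ℝ) u (g z)).symm
    rw [h0, hg z, ← hcomm]
    simp only [innerSL_apply_apply]
    simp [hu']
  -- every element of the span is a centered Gaussian
  have hspanG : ∀ h ∈ Submodule.span ℝ (Set.range f),
      ∃ v : NNReal, P.map ⇑h = gaussianReal 0 v := by
    intro h hh
    rw [Submodule.mem_span_set'] at hh
    obtain ⟨n, cc, y, hsum⟩ := hh
    choose x hx using fun i => (y i).2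
    obtain ⟨v, hv⟩ := hGP n x cc
    refine ⟨v, ?_⟩
    rw [← hv]
    apply Measure.map_congr
    have hh' : h = ∑ i, cc i • f (x i) := by
      rw [← hsum]
      refine Finset.sum_congr rfl fun i _ => ?_
      rw [hx i]
    rw [hh']
    exact coeFn_lincomb Finset.univ cc (fun i => f (x i))
  -- every element of the closure is a centered Gaussian
  have hVG : ∀ h ∈ V, ∃ v : NNReal, P.map ⇑h = gaussianReal 0 v := by
    intro h hh
    haveI : FrechetUrysohnSpace (Lp ℝ 2 P) := lp_frechetUrysohn
    have hcl : h ∈ closure ((Submodule.span ℝ (Set.range f) : Submodule ℝ _) : Set (Lp ℝ 2 P)) := by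
      rw [← Submodule.topologicalClosure_coe]
      exact hh
    rw [mem_closure_iff_seq_limit] at hcl
    obtain ⟨seq, hseq, hseqlim⟩ := hcl
    exact gaussian_lp_limit h seq (fun n => hspanG _ (hseq n)) hseqlim
  constructor
  · -- Gaussianity
    intro n t cc
    have hmem : (∑ i, cc i • g (t i)) ∈ V :=
      Submodule.sum_mem _ fun i _ => Submodule.smul_mem _ _ (hgV (t i))
    obtain ⟨v, hv⟩ := hVG _ hmem
    refine ⟨v, ?_⟩
    rw [← hv]
    exact Measure.map_congr (coeFn_lincomb Finset.univ cc (fun i => g (t i))).symm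
  · -- covariance
    intro z z'
    haveI := hfin z
    haveI := hfin z'
    have hkinner : ∀ x x', k x x' = @inner ℝ _ _ (f x) (f x') := by
      intro x x'
      rw [hk, hinner]
    have step1 : @inner ℝ _ _ (g z) (g z') = ∫ x', @inner ℝ _ _ (g z) (f x') ∂(ν z') := by
      have h0 : (inner ℝ (g z) (g z') : ℝ) = ((innerSL ℝ) (g z)) (g z') :=
        (innerSL_apply_apply (𝕜 := ℝ) (g z) (g z')).symm
      rw [h0, hg z', ← (innerSL ℝ (g z)).integral_comp_comm (hint z')]
      simp only [innerSL_apply_apply]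
    have step2 : ∀ x', @inner ℝ _ _ (g z) (f x') = ∫ x, k x x' ∂(ν z) := by
      intro x'
      rw [real_inner_comm]
      have h0 : (inner ℝ (f x') (g z) : ℝ) = ((innerSL ℝ) (f x')) (g z) :=
        (innerSL_apply_apply (𝕜 := ℝ) (f x') (g z)).symm
      rw [h0, hg z, ← (innerSL ℝ (f x')).integral_comp_comm (hint z)]
      simp only [innerSL_apply_apply]
      refine integral_congr_ae (Filter.Eventually.of_forall fun x => ?_)
      dsimp only
      rw [hkinner x x', real_inner_comm]
    rw [← hinner, step1]
    refine integral_congr_ae (Filter.Eventually.of_forall fun x' => ?_)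
    exact step2 x'
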